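/- Let c_α := (Γ(1/α)/(π(α−1)))^{1/2}. For all t, t′ ≥ 0 with t + t′ > 0: ∫₀^{t∧t′} ∫_ℝ p_{t−s}(y) p_{t′−s}(y) dy ds = c_α² · 2^{(1−α)/α} · ( (t + t′)^{(α−1)/α} − |t − t′|^{(α−1)/α} ). In particular, for each fixed spatial point, the centered Gaussian random field solving the linear stochastic heat equation ∂_t v = ½ Δ_{α/2} v + space-time white noise has, in time, the covariance of c_α times a bifractional Brownian motion with parameters H = 1/2 and K = (α−1)/α. -/

import Mathlib

open MeasureTheory Real Filter Topology

/-- The symmetric α-stable heat kernel on ℝ: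
`p_t(x) = (2π)⁻¹ ∫ cos(ξx) e^{−t|ξ|^α/2} dξ`. -/
noncomputable def stableKernel (α t x : ℝ) : ℝ :=
  (2 * Real.pi)⁻¹ * ∫ ξ : ℝ, Real.cos (ξ * x) * Real.exp (-(t * |ξ| ^ α) / 2)

namespace StableAux


/-- Gaussian–cosine integral. -/
lemma integral_gauss_cos {ε : ℝ} (hε : 0 < ε) (c : ℝ) :
    ∫ y : ℝ, Real.exp (-(ε * y ^ 2)) * Real.cos (c * y)
      = Real.sqrt (π / ε) * Real.exp (-c ^ 2 / (4 * ε)) := by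
  have hb : (0:ℝ) < ((ε : ℂ)).re := by simpa using hε
  have h := fourierIntegral_gaussian (b := (ε : ℂ)) hb (c : ℂ)
  have hInt : Integrable fun x : ℝ =>
      Complex.exp (Complex.I * (c:ℂ) * (x:ℂ)) * Complex.exp (-(ε:ℂ) * (x:ℂ) ^ 2) := by
    refine (integrable_cexp_quadratic hb (Complex.I * c) 0).congr ?_
    filter_upwards with x
    rw [← Complex.exp_add]
    ring_nf
  have hre : ∀ x : ℝ, (Complex.exp (Complex.I * (c:ℂ) * (x:ℂ))
      * Complex.exp (-(ε:ℂ) * (x:ℂ) ^ 2)).re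
      = Real.exp (-(ε * x ^ 2)) * Real.cos (c * x) := by
    intro x
    rw [← Complex.exp_add, Complex.exp_re]
    congr 2
    · simp [← Complex.ofReal_pow, Complex.add_re, Complex.mul_re, Complex.I_re, Complex.I_im]
    · congr 1
      simp [← Complex.ofReal_pow, Complex.add_im, Complex.mul_im, Complex.I_re, Complex.I_im]
  calc ∫ y : ℝ, Real.exp (-(ε * y ^ 2)) * Real.cos (c * y)
      = ∫ y : ℝ, (Complex.exp (Complex.I * (c:ℂ) * (y:ℂ))
          * Complex.exp (-(ε:ℂ) * (y:ℂ) ^ 2)).re := by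
        simp_rw [hre]
    _ = (∫ y : ℝ, Complex.exp (Complex.I * (c:ℂ) * (y:ℂ))
          * Complex.exp (-(ε:ℂ) * (y:ℂ) ^ 2)).re := by
        simpa using (integral_re hInt)
    _ = (((π / ε : ℝ) : ℂ) ^ ((1:ℂ)/2) * Complex.exp (((-c ^ 2 / (4 * ε) : ℝ) : ℂ))).re := by
        rw [h]; norm_num
    _ = Real.sqrt (π / ε) * Real.exp (-c ^ 2 / (4 * ε)) := by
        have h2 : ((1:ℂ)/2) = (((1/2 : ℝ) : ℝ) : ℂ) := by norm_num
        have h1 : (((π / ε : ℝ)) : ℂ) ^ ((1:ℂ)/2) = (((π / ε : ℝ) ^ ((1/2:ℝ)) : ℝ) : ℂ) := by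
          rw [h2, Complex.ofReal_cpow (by positivity)]
        rw [h1, ← Complex.ofReal_exp, ← Complex.ofReal_mul, Complex.ofReal_re,
          Real.sqrt_eq_rpow]



/-- Change of variables `η = d + 2√ε u` in a Gaussian smoothing integral. -/
lemma gauss_subst (B : ℝ → ℝ) {ε : ℝ} (hε : 0 < ε) (d : ℝ) :
    ∫ η : ℝ, B η * (Real.sqrt (π / ε) * Real.exp (-(η - d) ^ 2 / (4 * ε)))
      = ∫ u : ℝ, B (d + 2 * Real.sqrt ε * u) * (2 * Real.sqrt π * Real.exp (-u ^ 2)) := by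
  set f : ℝ → ℝ := fun η => B η * (Real.sqrt (π / ε) * Real.exp (-(η - d) ^ 2 / (4 * ε))) with hf
  have ha : (0:ℝ) < 2 * Real.sqrt ε := by positivity
  have h1 : ∫ η, f η = ∫ x, f (d + x) :=
    (integral_add_left_eq_self f d).symm
  have h2 : ∫ u, f (d + 2 * Real.sqrt ε * u) = |(2 * Real.sqrt ε)⁻¹| • ∫ x, f (d + x) :=
    MeasureTheory.Measure.integral_comp_mul_left (fun x => f (d + x)) (2 * Real.sqrt ε)
  have h2' : ∫ x, f (d + x) = (2 * Real.sqrt ε) • ∫ u, f (d + 2 * Real.sqrt ε * u) := by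
    rw [h2, smul_smul, abs_of_pos (by positivity : (0:ℝ) < (2 * Real.sqrt ε)⁻¹),
      mul_inv_cancel₀ ha.ne', one_smul]
  have h3 : ∀ u : ℝ, f (d + 2 * Real.sqrt ε * u)
      = B (d + 2 * Real.sqrt ε * u) * (Real.sqrt (π / ε) * Real.exp (-u ^ 2)) := by
    intro u
    have : -(d + 2 * Real.sqrt ε * u - d) ^ 2 / (4 * ε) = -u ^ 2 := by
      have h4 : (d + 2 * Real.sqrt ε * u - d) ^ 2 = 4 * ε * u ^ 2 := by
        have : (2 * Real.sqrt ε) ^ 2 = 4 * ε := by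
          rw [mul_pow, sq_sqrt hε.le]; ring
        calc (d + 2 * Real.sqrt ε * u - d) ^ 2 = (2 * Real.sqrt ε) ^ 2 * u ^ 2 := by ring
          _ = 4 * ε * u ^ 2 := by rw [this]
      rw [h4, div_eq_iff (by positivity : (4:ℝ) * ε ≠ 0)]; ring
    rw [hf]; simp only []; rw [this]
  rw [h1, h2']
  rw [← integral_smul]
  congr 1
  funext u
  rw [h3 u, smul_eq_mul]
  have h6 : 2 * Real.sqrt ε * Real.sqrt (π / ε) = 2 * Real.sqrt π := by
    rw [mul_assoc, ← Real.sqrt_mul hε.le]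
    rw [mul_div_cancel₀ _ hε.ne']
  calc 2 * Real.sqrt ε * (B (d + 2 * Real.sqrt ε * u) * (Real.sqrt (π / ε) * Real.exp (-u ^ 2)))
      = B (d + 2 * Real.sqrt ε * u) * (2 * Real.sqrt ε * Real.sqrt (π / ε) * Real.exp (-u ^ 2)) := by
        ring
    _ = _ := by rw [h6]

lemma exp_neg_sq_integrable : Integrable (fun u : ℝ => Real.exp (-u ^ 2)) := by
  simpa using integrable_exp_neg_mul_sq (one_pos)

/-- Limit of the Gaussian smoothing as `ε → 0⁺`. -/
lemma S_tendsto {B : ℝ → ℝ} (hBc : Continuous B) (hB0 : ∀ x, 0 ≤ B x) (hB1 : ∀ x, B x ≤ 1)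
    (d : ℝ) :
    Tendsto (fun ε : ℝ => ∫ u : ℝ, B (d + 2 * Real.sqrt ε * u) * (2 * Real.sqrt π * Real.exp (-u ^ 2)))
      (𝓝[>] (0:ℝ)) (𝓝 (2 * π * B d)) := by
  have hint : Integrable (fun u : ℝ => 2 * Real.sqrt π * Real.exp (-u ^ 2)) :=
    exp_neg_sq_integrable.const_mul _
  have hval : ∫ u : ℝ, B d * (2 * Real.sqrt π * Real.exp (-u ^ 2)) = 2 * π * B d := by
    rw [integral_const_mul, integral_const_mul]
    have : ∫ u : ℝ, Real.exp (-u ^ 2) = Real.sqrt π := by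
      have := integral_gaussian 1
      simpa using this
    rw [this]
    have h7 : Real.sqrt π * Real.sqrt π = π := Real.mul_self_sqrt pi_pos.le
    rw [show 2 * Real.sqrt π * Real.sqrt π = 2 * π by rw [mul_assoc, h7]]
    ring
  rw [← hval]
  apply tendsto_integral_filter_of_dominated_convergence
    (fun u : ℝ => 2 * Real.sqrt π * Real.exp (-u ^ 2))
  · filter_upwards with ε
    exact ((hBc.comp (by continuity)).mul (by continuity)).aestronglyMeasurable
  · filter_upwards with ε
    filter_upwards with u
    have h1 : (0:ℝ) ≤ 2 * Real.sqrt π * Real.exp (-u ^ 2) := by positivity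
    rw [Real.norm_eq_abs, abs_mul, abs_of_nonneg (hB0 _), abs_of_nonneg h1]
    calc B (d + 2 * Real.sqrt ε * u) * (2 * Real.sqrt π * Real.exp (-u ^ 2))
        ≤ 1 * (2 * Real.sqrt π * Real.exp (-u ^ 2)) := by
          apply mul_le_mul_of_nonneg_right (hB1 _) h1
      _ = 2 * Real.sqrt π * Real.exp (-u ^ 2) := one_mul _
  · exact hint
  · filter_upwards with u
    have hs : Tendsto (fun ε : ℝ => Real.sqrt ε) (𝓝[>] (0:ℝ)) (𝓝 0) :=
      (Real.continuous_sqrt.tendsto' 0 0 Real.sqrt_zero).mono_left nhdsWithin_le_nhds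
    have harg : Tendsto (fun ε : ℝ => d + 2 * Real.sqrt ε * u) (𝓝[>] (0:ℝ)) (𝓝 d) := by
      have : Tendsto (fun ε : ℝ => 2 * Real.sqrt ε * u) (𝓝[>] (0:ℝ)) (𝓝 (2 * 0 * u)) :=
        (hs.const_mul 2).mul_const u
      have h := tendsto_const_nhds (x := d) (f := 𝓝[>] (0:ℝ)) |>.add this
      simpa using h
    exact ((hBc.tendsto d).comp harg).mul_const _


/-- Cosine transform. -/
noncomputable def CT (f : ℝ → ℝ) (y : ℝ) : ℝ := ∫ ξ : ℝ, Real.cos (ξ * y) * f ξ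

/-- Gaussian smoothing. -/
noncomputable def S (B : ℝ → ℝ) (ε d : ℝ) : ℝ :=
  ∫ u : ℝ, B (d + 2 * Real.sqrt ε * u) * (2 * Real.sqrt π * Real.exp (-u ^ 2))

lemma cos_mul_cos' (p q : ℝ) :
    Real.cos p * Real.cos q = (Real.cos (p - q) + Real.cos (p + q)) / 2 := by
  rw [Real.cos_sub, Real.cos_add]; ring

lemma gauss_cos_integrable {ε : ℝ} (hε : 0 < ε) (c : ℝ) :
    Integrable (fun y : ℝ => Real.exp (-(ε * y ^ 2)) * Real.cos (c * y)) := by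
  have hg : Integrable (fun y : ℝ => Real.exp (-(ε * y ^ 2))) := by
    simpa [neg_mul] using integrable_exp_neg_mul_sq hε
  refine hg.mono ((Real.continuous_exp.comp (by fun_prop)).mul
    (Real.continuous_cos.comp (by fun_prop)) |>.aestronglyMeasurable) ?_
  filter_upwards with y
  rw [Real.norm_eq_abs, Real.norm_eq_abs, abs_mul, Real.abs_exp]
  exact mul_le_of_le_one_right (Real.exp_pos _).le (Real.abs_cos_le_one _)

variable {A B : ℝ → ℝ}

lemma J_eq (hAc : Continuous A) (hA : Integrable A) (hA0 : ∀ x, 0 ≤ A x)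
    (hBc : Continuous B) (hB : Integrable B) (hB0 : ∀ x, 0 ≤ B x) (hB1 : ∀ x, B x ≤ 1)
    {ε : ℝ} (hε : 0 < ε) :
    ∫ y : ℝ, Real.exp (-(ε * y ^ 2)) * (CT A y * CT B y)
      = ∫ ξ : ℝ, A ξ * ((S B ε ξ + S B ε (-ξ)) / 2) := by
  have hgauss : Integrable (fun y : ℝ => Real.exp (-(ε * y ^ 2))) := by
    simpa [neg_mul] using integrable_exp_neg_mul_sq hε
  set F : ℝ → ℝ × ℝ → ℝ := fun y z => Real.exp (-(ε * y ^ 2)) *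
      ((Real.cos (z.1 * y) * A z.1) * (Real.cos (z.2 * y) * B z.2)) with hF
  have hFcont : Continuous (Function.uncurry F) := by
    have : Function.uncurry F = fun p : ℝ × (ℝ × ℝ) => Real.exp (-(ε * p.1 ^ 2)) *
        ((Real.cos (p.2.1 * p.1) * A p.2.1) * (Real.cos (p.2.2 * p.1) * B p.2.2)) := rfl
    rw [this]
    exact (Real.continuous_exp.comp (by fun_prop)).mul
      (((Real.continuous_cos.comp ((continuous_fst.comp continuous_snd).mul
        continuous_fst)).mul (hAc.comp (continuous_fst.comp continuous_snd))).mul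
      ((Real.continuous_cos.comp ((continuous_snd.comp continuous_snd).mul
        continuous_fst)).mul (hBc.comp (continuous_snd.comp continuous_snd))))
  have hFint : Integrable (Function.uncurry F) (volume.prod (volume.prod volume)) := by
    have hG : Integrable (fun p : ℝ × (ℝ × ℝ) =>
        Real.exp (-(ε * p.1 ^ 2)) * (A p.2.1 * B p.2.2)) (volume.prod (volume.prod volume)) :=
      hgauss.mul_prod (hA.mul_prod hB)
    refine hG.mono hFcont.aestronglyMeasurable ?_
    filter_upwards with p
    rw [Real.norm_eq_abs, Real.norm_eq_abs]
    have h1 : |Function.uncurry F p| ≤ Real.exp (-(ε * p.1 ^ 2)) * (A p.2.1 * B p.2.2) := by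
      have : Function.uncurry F p = Real.exp (-(ε * p.1 ^ 2)) *
          ((Real.cos (p.2.1 * p.1) * A p.2.1) * (Real.cos (p.2.2 * p.1) * B p.2.2)) := rfl
      rw [this]
      simp only [abs_mul, Real.abs_exp]
      have h2 := Real.abs_cos_le_one (p.2.1 * p.1)
      have h3 := Real.abs_cos_le_one (p.2.2 * p.1)
      have h4 := abs_nonneg (Real.cos (p.2.1 * p.1))
      have h5 := abs_nonneg (Real.cos (p.2.2 * p.1))
      have hA' := hA0 p.2.1
      have hB' := hB0 p.2.2
      rw [abs_of_nonneg hA', abs_of_nonneg hB']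
      refine mul_le_mul_of_nonneg_left ?_ (Real.exp_pos _).le
      exact mul_le_mul (mul_le_of_le_one_left hA' h2) (mul_le_of_le_one_left hB' h3)
        (mul_nonneg h5 hB') hA'
    refine h1.trans (le_abs_self _)
  have step1 : ∀ y : ℝ, Real.exp (-(ε * y ^ 2)) * (CT A y * CT B y)
      = ∫ z : ℝ × ℝ, F y z ∂(volume.prod volume) := by
    intro y
    rw [CT, CT, ← integral_prod_mul (fun ξ => Real.cos (ξ * y) * A ξ)
      (fun η => Real.cos (η * y) * B η), ← integral_const_mul]
  have step2 : ∫ y : ℝ, ∫ z : ℝ × ℝ, F y z ∂(volume.prod volume)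
      = ∫ z : ℝ × ℝ, (∫ y : ℝ, F y z) ∂(volume.prod volume) :=
    integral_integral_swap hFint
  set K : ℝ × ℝ → ℝ := fun z => (A z.1 * B z.2) *
      ((Real.sqrt (π / ε) * Real.exp (-(z.1 - z.2) ^ 2 / (4 * ε))
        + Real.sqrt (π / ε) * Real.exp (-(z.1 + z.2) ^ 2 / (4 * ε))) / 2) with hK
  have step3 : ∀ z : ℝ × ℝ, ∫ y : ℝ, F y z = K z := by
    intro z
    have hrw : ∀ y : ℝ, F y z = (A z.1 * B z.2) *
        ((Real.exp (-(ε * y ^ 2)) * Real.cos ((z.1 - z.2) * y)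
          + Real.exp (-(ε * y ^ 2)) * Real.cos ((z.1 + z.2) * y)) / 2) := by
      intro y
      have hFyz : F y z = Real.exp (-(ε * y ^ 2)) *
          ((Real.cos (z.1 * y) * A z.1) * (Real.cos (z.2 * y) * B z.2)) := rfl
      rw [hFyz, sub_mul, add_mul,
        show Real.cos (z.1 * y) * A z.1 * (Real.cos (z.2 * y) * B z.2)
          = (Real.cos (z.1 * y) * Real.cos (z.2 * y)) * (A z.1 * B z.2) by ring,
        cos_mul_cos' (z.1 * y) (z.2 * y)]
      ring
    simp_rw [hrw]
    rw [integral_const_mul, integral_div,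
      integral_add (gauss_cos_integrable hε _) (gauss_cos_integrable hε _),
      integral_gauss_cos hε (z.1 - z.2), integral_gauss_cos hε (z.1 + z.2), hK]
  have hKint : Integrable K (volume.prod volume) := by
    have hG2 : Integrable (fun z : ℝ × ℝ => Real.sqrt (π / ε) * (A z.1 * B z.2))
        (volume.prod volume) := (hA.mul_prod hB).const_mul _
    refine hG2.mono ?_ ?_
    · refine Continuous.aestronglyMeasurable ?_
      refine ((hAc.comp continuous_fst).mul (hBc.comp continuous_snd)).mul ?_
      refine Continuous.div_const (Continuous.add ?_ ?_) 2
      · exact continuous_const.mul (Real.continuous_exp.comp (by fun_prop))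
      · exact continuous_const.mul (Real.continuous_exp.comp (by fun_prop))
    · filter_upwards with z
      rw [Real.norm_eq_abs, Real.norm_eq_abs]
      have hKz : K z = (A z.1 * B z.2) *
          ((Real.sqrt (π / ε) * Real.exp (-(z.1 - z.2) ^ 2 / (4 * ε))
            + Real.sqrt (π / ε) * Real.exp (-(z.1 + z.2) ^ 2 / (4 * ε))) / 2) := rfl
      rw [hKz]
      have hAB : 0 ≤ A z.1 * B z.2 := mul_nonneg (hA0 _) (hB0 _)
      have hc : (0:ℝ) ≤ Real.sqrt (π / ε) := Real.sqrt_nonneg _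
      have he1 : Real.exp (-(z.1 - z.2) ^ 2 / (4 * ε)) ≤ 1 := by
        apply Real.exp_le_one_iff.mpr; exact div_nonpos_of_nonpos_of_nonneg (neg_nonpos.mpr (sq_nonneg _)) (by positivity)
      have he2 : Real.exp (-(z.1 + z.2) ^ 2 / (4 * ε)) ≤ 1 := by
        apply Real.exp_le_one_iff.mpr; exact div_nonpos_of_nonpos_of_nonneg (neg_nonpos.mpr (sq_nonneg _)) (by positivity)
      have he1' := (Real.exp_pos (-(z.1 - z.2) ^ 2 / (4 * ε))).le
      have he2' := (Real.exp_pos (-(z.1 + z.2) ^ 2 / (4 * ε))).le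
      rw [abs_of_nonneg (by positivity), abs_of_nonneg (by positivity)]
      have hmid : (Real.sqrt (π / ε) * Real.exp (-(z.1 - z.2) ^ 2 / (4 * ε))
          + Real.sqrt (π / ε) * Real.exp (-(z.1 + z.2) ^ 2 / (4 * ε))) / 2
          ≤ Real.sqrt (π / ε) := by
        rw [div_le_iff₀ (by norm_num : (0:ℝ) < 2)]
        have h6 := mul_le_of_le_one_right hc he1
        have h7 := mul_le_of_le_one_right hc he2
        linarith
      calc A z.1 * B z.2 * ((Real.sqrt (π / ε) * Real.exp (-(z.1 - z.2) ^ 2 / (4 * ε))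
            + Real.sqrt (π / ε) * Real.exp (-(z.1 + z.2) ^ 2 / (4 * ε))) / 2)
          ≤ A z.1 * B z.2 * Real.sqrt (π / ε) := mul_le_mul_of_nonneg_left hmid hAB
        _ = Real.sqrt (π / ε) * (A z.1 * B z.2) := mul_comm _ _
  have step5 : ∫ z : ℝ × ℝ, K z ∂(volume.prod volume) = ∫ ξ : ℝ, ∫ η : ℝ, K (ξ, η) :=
    integral_prod K hKint
  have step6 : ∀ ξ : ℝ, (∫ η : ℝ, K (ξ, η)) = A ξ * ((S B ε ξ + S B ε (-ξ)) / 2) := by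
    intro ξ
    have hrw2 : ∀ η : ℝ, K (ξ, η) = A ξ *
        ((B η * (Real.sqrt (π / ε) * Real.exp (-(η - ξ) ^ 2 / (4 * ε)))
          + B η * (Real.sqrt (π / ε) * Real.exp (-(η - -ξ) ^ 2 / (4 * ε)))) / 2) := by
      intro η
      have hKz : K (ξ, η) = (A ξ * B η) *
          ((Real.sqrt (π / ε) * Real.exp (-(ξ - η) ^ 2 / (4 * ε))
            + Real.sqrt (π / ε) * Real.exp (-(ξ + η) ^ 2 / (4 * ε))) / 2) := rfl
      rw [hKz, show -(ξ - η) ^ 2 / (4 * ε) = -(η - ξ) ^ 2 / (4 * ε) by ring,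
        show -(ξ + η) ^ 2 / (4 * ε) = -(η - -ξ) ^ 2 / (4 * ε) by ring]
      ring
    have hint1 : ∀ d : ℝ, Integrable (fun η : ℝ =>
        B η * (Real.sqrt (π / ε) * Real.exp (-(η - d) ^ 2 / (4 * ε)))) := by
      intro d
      refine (hB.const_mul (Real.sqrt (π / ε))).mono ?_ ?_
      · refine Continuous.aestronglyMeasurable ?_
        exact hBc.mul (continuous_const.mul (Real.continuous_exp.comp (by fun_prop)))
      · filter_upwards with η
        have he : Real.exp (-(η - d) ^ 2 / (4 * ε)) ≤ 1 := by
          apply Real.exp_le_one_iff.mpr; exact div_nonpos_of_nonpos_of_nonneg (neg_nonpos.mpr (sq_nonneg _)) (by positivity)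
        rw [Real.norm_eq_abs, Real.norm_eq_abs,
          abs_of_nonneg (mul_nonneg (hB0 η) (by positivity)),
          abs_of_nonneg (mul_nonneg (Real.sqrt_nonneg _) (hB0 η))]
        calc B η * (Real.sqrt (π / ε) * Real.exp (-(η - d) ^ 2 / (4 * ε)))
            ≤ B η * (Real.sqrt (π / ε) * 1) := by
              refine mul_le_mul_of_nonneg_left ?_ (hB0 η)
              exact mul_le_mul_of_nonneg_left he (Real.sqrt_nonneg _)
          _ = Real.sqrt (π / ε) * B η := by ring
    simp_rw [hrw2]
    rw [integral_const_mul, integral_div, integral_add (hint1 ξ) (hint1 (-ξ)),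
      gauss_subst B hε ξ, gauss_subst B hε (-ξ)]
    rfl
  calc ∫ y : ℝ, Real.exp (-(ε * y ^ 2)) * (CT A y * CT B y)
      = ∫ y : ℝ, ∫ z : ℝ × ℝ, F y z ∂(volume.prod volume) := by simp_rw [step1]
    _ = ∫ z : ℝ × ℝ, (∫ y : ℝ, F y z) ∂(volume.prod volume) := step2
    _ = ∫ z : ℝ × ℝ, K z ∂(volume.prod volume) := by simp_rw [step3]
    _ = ∫ ξ : ℝ, ∫ η : ℝ, K (ξ, η) := step5
    _ = ∫ ξ : ℝ, A ξ * ((S B ε ξ + S B ε (-ξ)) / 2) := by simp_rw [step6]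

lemma CT_aesm {f : ℝ → ℝ} (hf : Integrable f) : AEStronglyMeasurable (CT f) volume := by
  have h : AEStronglyMeasurable (fun p : ℝ × ℝ => Real.cos (p.2 * p.1) * f p.2)
      (volume.prod volume) :=
    (Real.continuous_cos.comp (continuous_snd.mul continuous_fst)).aestronglyMeasurable.mul
      (Integrable.aestronglyMeasurable hf).comp_snd
  exact h.integral_prod_right'

lemma CT_bound {f : ℝ → ℝ} (hf : Integrable f) (y : ℝ) : |CT f y| ≤ ∫ ξ : ℝ, |f ξ| := by
  rw [CT, ← Real.norm_eq_abs]
  refine (norm_integral_le_integral_norm _).trans ?_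
  refine integral_mono_of_nonneg (Filter.Eventually.of_forall fun ξ => norm_nonneg _)
    hf.abs (Filter.Eventually.of_forall fun ξ => ?_)
  show ‖Real.cos (ξ * y) * f ξ‖ ≤ |f ξ|
  rw [Real.norm_eq_abs, abs_mul]
  exact mul_le_of_le_one_left (abs_nonneg _) (Real.abs_cos_le_one _)

lemma gauss2_integrable : Integrable (fun u : ℝ => 2 * Real.sqrt π * Real.exp (-u ^ 2)) :=
  exp_neg_sq_integrable.const_mul _

lemma gauss2_integral : ∫ u : ℝ, 2 * Real.sqrt π * Real.exp (-u ^ 2) = 2 * π := by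
  rw [integral_const_mul]
  have h : ∫ u : ℝ, Real.exp (-u ^ 2) = Real.sqrt π := by simpa using integral_gaussian 1
  rw [h, mul_assoc, Real.mul_self_sqrt pi_pos.le]

variable {A B : ℝ → ℝ}

lemma S_integrand_integrable (hBc : Continuous B) (hB0 : ∀ x, 0 ≤ B x) (hB1 : ∀ x, B x ≤ 1)
    (ε d : ℝ) :
    Integrable (fun u : ℝ => B (d + 2 * Real.sqrt ε * u) * (2 * Real.sqrt π * Real.exp (-u ^ 2))) := by
  refine gauss2_integrable.mono ((hBc.comp (by fun_prop)).mul (by fun_prop)).aestronglyMeasurable ?_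
  filter_upwards with u
  rw [Real.norm_eq_abs, Real.norm_eq_abs, abs_of_nonneg (mul_nonneg (hB0 _) (by positivity)),
    abs_of_nonneg (by positivity)]
  exact mul_le_of_le_one_left (by positivity) (hB1 _)

lemma S_nonneg (hB0 : ∀ x, 0 ≤ B x) (ε d : ℝ) : 0 ≤ S B ε d :=
  integral_nonneg fun u => mul_nonneg (hB0 _) (by positivity)

lemma S_le (hBc : Continuous B) (hB0 : ∀ x, 0 ≤ B x) (hB1 : ∀ x, B x ≤ 1) (ε d : ℝ) :
    S B ε d ≤ 2 * π := by
  rw [S, ← gauss2_integral]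
  refine integral_mono (S_integrand_integrable hBc hB0 hB1 ε d) gauss2_integrable fun u => ?_
  exact mul_le_of_le_one_left (by positivity) (hB1 _)

lemma S_cont (hBc : Continuous B) (hB0 : ∀ x, 0 ≤ B x) (hB1 : ∀ x, B x ≤ 1) (ε : ℝ) :
    Continuous fun d => S B ε d := by
  refine continuous_of_dominated (F := fun d u =>
      B (d + 2 * Real.sqrt ε * u) * (2 * Real.sqrt π * Real.exp (-u ^ 2)))
      (bound := fun u : ℝ => 2 * Real.sqrt π * Real.exp (-u ^ 2)) ?_ ?_ gauss2_integrable ?_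
  · intro d
    exact ((hBc.comp (by fun_prop)).mul (by fun_prop)).aestronglyMeasurable
  · intro d
    filter_upwards with u
    rw [Real.norm_eq_abs, abs_of_nonneg (mul_nonneg (hB0 _) (by positivity))]
    exact mul_le_of_le_one_left (by positivity) (hB1 _)
  · filter_upwards with u
    exact (hBc.comp (by fun_prop)).mul continuous_const

lemma J_tendsto (hAc : Continuous A) (hA : Integrable A) (hA0 : ∀ x, 0 ≤ A x)
    (hBc : Continuous B) (hB0 : ∀ x, 0 ≤ B x) (hB1 : ∀ x, B x ≤ 1)
    (hBe : ∀ x, B (-x) = B x) :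
    Tendsto (fun ε : ℝ => ∫ ξ : ℝ, A ξ * ((S B ε ξ + S B ε (-ξ)) / 2))
      (𝓝[>] (0:ℝ)) (𝓝 (2 * π * ∫ ξ : ℝ, A ξ * B ξ)) := by
  have hval : ∫ ξ : ℝ, A ξ * (2 * π * B ξ) = 2 * π * ∫ ξ : ℝ, A ξ * B ξ := by
    simp_rw [show ∀ ξ : ℝ, A ξ * (2 * π * B ξ) = 2 * π * (A ξ * B ξ) from fun ξ => by ring]
    rw [integral_const_mul]
  rw [← hval]
  apply tendsto_integral_filter_of_dominated_convergence (fun ξ : ℝ => 2 * π * A ξ)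
  · filter_upwards with ε
    refine (hAc.mul ?_).aestronglyMeasurable
    exact ((S_cont hBc hB0 hB1 ε).add ((S_cont hBc hB0 hB1 ε).comp continuous_neg)).div_const 2
  · filter_upwards with ε
    filter_upwards with ξ
    have h1 := S_nonneg hB0 ε ξ
    have h2 := S_nonneg hB0 ε (-ξ)
    have h3 := S_le hBc hB0 hB1 ε ξ
    have h4 := S_le hBc hB0 hB1 ε (-ξ)
    rw [Real.norm_eq_abs, abs_mul, abs_of_nonneg (hA0 ξ), abs_of_nonneg (by positivity)]
    rw [mul_comm (2 * π) (A ξ)]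
    refine mul_le_mul_of_nonneg_left ?_ (hA0 ξ)
    linarith
  · exact hA.const_mul _
  · filter_upwards with ξ
    have h1 : Tendsto (fun ε : ℝ => S B ε ξ) (𝓝[>] (0:ℝ)) (𝓝 (2 * π * B ξ)) :=
      S_tendsto hBc hB0 hB1 ξ
    have h2 : Tendsto (fun ε : ℝ => S B ε (-ξ)) (𝓝[>] (0:ℝ)) (𝓝 (2 * π * B ξ)) := by
      have := S_tendsto hBc hB0 hB1 (-ξ)
      rwa [hBe ξ] at this
    have h3 := ((h1.add h2).div_const 2).const_mul (A ξ)
    have h4 : A ξ * ((2 * π * B ξ + 2 * π * B ξ) / 2) = A ξ * (2 * π * B ξ) := by ring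
    rwa [h4] at h3

lemma damped_integrable (hA : Integrable A) (hB : Integrable B) {ε : ℝ} (hε : 0 < ε) :
    Integrable (fun y : ℝ => Real.exp (-(ε * y ^ 2)) * (CT A y * CT B y)) := by
  have hg : Integrable (fun y : ℝ => Real.exp (-(ε * y ^ 2))) := by
    simpa [neg_mul] using integrable_exp_neg_mul_sq hε
  have hMA : (0:ℝ) ≤ ∫ ξ : ℝ, |A ξ| := integral_nonneg fun ξ => abs_nonneg _
  have hMB : (0:ℝ) ≤ ∫ ξ : ℝ, |B ξ| := integral_nonneg fun ξ => abs_nonneg _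
  refine (hg.const_mul ((∫ ξ : ℝ, |A ξ|) * (∫ ξ : ℝ, |B ξ|))).mono
    ((Real.continuous_exp.comp (by fun_prop)).aestronglyMeasurable.mul
      ((CT_aesm hA).mul (CT_aesm hB))) ?_
  filter_upwards with y
  have hb : |CT A y| * |CT B y| ≤ (∫ ξ : ℝ, |A ξ|) * (∫ ξ : ℝ, |B ξ|) :=
    mul_le_mul (CT_bound hA y) (CT_bound hB y) (abs_nonneg _) hMA
  have h0 : (0:ℝ) ≤ ((∫ ξ : ℝ, |A ξ|) * (∫ ξ : ℝ, |B ξ|)) * Real.exp (-(ε * y ^ 2)) :=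
    mul_nonneg (mul_nonneg hMA hMB) (Real.exp_pos _).le
  rw [Real.norm_eq_abs, Real.norm_eq_abs, abs_mul, Real.abs_exp, abs_of_nonneg h0, abs_mul]
  calc Real.exp (-(ε * y ^ 2)) * (|CT A y| * |CT B y|)
      ≤ Real.exp (-(ε * y ^ 2)) * ((∫ ξ : ℝ, |A ξ|) * (∫ ξ : ℝ, |B ξ|)) :=
        mul_le_mul_of_nonneg_left hb (Real.exp_pos _).le
    _ = ((∫ ξ : ℝ, |A ξ|) * (∫ ξ : ℝ, |B ξ|)) * Real.exp (-(ε * y ^ 2)) := mul_comm _ _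

lemma J_tendsto' (hAc : Continuous A) (hA : Integrable A) (hA0 : ∀ x, 0 ≤ A x) (hA1 : ∀ x, A x ≤ 1)
    (hBc : Continuous B) (hB : Integrable B) (hB0 : ∀ x, 0 ≤ B x) (hB1 : ∀ x, B x ≤ 1)
    (hBe : ∀ x, B (-x) = B x) :
    Tendsto (fun ε : ℝ => ∫ y : ℝ, Real.exp (-(ε * y ^ 2)) * (CT A y * CT B y))
      (𝓝[>] (0:ℝ)) (𝓝 (2 * π * ∫ ξ : ℝ, A ξ * B ξ)) := by
  refine Filter.Tendsto.congr' ?_ (J_tendsto hAc hA hA0 hBc hB0 hB1 hBe)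
  filter_upwards [self_mem_nhdsWithin] with ε hε
  exact (J_eq hAc hA hA0 hBc hB hB0 hB1 hε).symm

lemma CT_sq_integrable (hAc : Continuous A) (hA : Integrable A) (hA0 : ∀ x, 0 ≤ A x)
    (hA1 : ∀ x, A x ≤ 1) (hAe : ∀ x, A (-x) = A x) :
    Integrable (fun y : ℝ => CT A y * CT A y) := by
  have hδ : Tendsto (fun n : ℕ => (1:ℝ) / (n + 1)) atTop (𝓝[>] (0:ℝ)) := by
    rw [tendsto_nhdsWithin_iff]
    exact ⟨tendsto_one_div_add_atTop_nhds_zero_nat,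
      Filter.Eventually.of_forall fun n => Set.mem_Ioi.mpr (by positivity)⟩
  have hJ : Tendsto (fun n : ℕ => ∫ y : ℝ, Real.exp (-((1:ℝ)/(n+1) * y ^ 2)) * (CT A y * CT A y))
      atTop (𝓝 (2 * π * ∫ ξ : ℝ, A ξ * A ξ)) :=
    (J_tendsto' hAc hA hA0 hA1 hAc hA hA0 hA1 hAe).comp hδ
  have hδpos : ∀ n : ℕ, (0:ℝ) < 1 / (n + 1) := by intro n; positivity
  have hPm : AEMeasurable (CT A) volume := (CT_aesm hA).aemeasurable
  have hmeas : ∀ n : ℕ, AEMeasurable (fun y : ℝ =>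
      ENNReal.ofReal (Real.exp (-((1:ℝ)/(n+1) * y ^ 2)) * (CT A y * CT A y))) volume := by
    intro n
    refine ENNReal.measurable_ofReal.comp_aemeasurable ?_
    exact ((Real.continuous_exp.comp (by fun_prop)).measurable.aemeasurable).mul (hPm.mul hPm)
  have hmono : ∀ᵐ y : ℝ ∂volume, Monotone fun n : ℕ =>
      ENNReal.ofReal (Real.exp (-((1:ℝ)/(n+1) * y ^ 2)) * (CT A y * CT A y)) := by
    filter_upwards with y
    intro m n hmn
    apply ENNReal.ofReal_le_ofReal
    refine mul_le_mul_of_nonneg_right ?_ (mul_self_nonneg _)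
    apply Real.exp_le_exp.mpr
    have h1 : (1:ℝ)/(n+1) ≤ 1/(m+1) := by
      apply one_div_le_one_div_of_le (by positivity)
      have := (Nat.cast_le (α := ℝ)).mpr hmn; linarith
    nlinarith [sq_nonneg y]
  have htd : ∀ᵐ y : ℝ ∂volume, Tendsto (fun n : ℕ =>
      ENNReal.ofReal (Real.exp (-((1:ℝ)/(n+1) * y ^ 2)) * (CT A y * CT A y))) atTop
      (𝓝 (ENNReal.ofReal (CT A y * CT A y))) := by
    filter_upwards with y
    apply ENNReal.tendsto_ofReal
    have h1 : Tendsto (fun n : ℕ => -((1:ℝ)/(n+1) * y ^ 2)) atTop (𝓝 (-(0 * y ^ 2))) :=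
      (tendsto_one_div_add_atTop_nhds_zero_nat.mul_const _).neg
    have h2 := ((Real.continuous_exp.tendsto _).comp h1).mul_const (CT A y * CT A y)
    simpa using h2
  have hlimint := lintegral_tendsto_of_tendsto_of_monotone hmeas hmono htd
  have heq : ∀ n : ℕ, (∫⁻ y : ℝ, ENNReal.ofReal
      (Real.exp (-((1:ℝ)/(n+1) * y ^ 2)) * (CT A y * CT A y)) ∂volume)
      = ENNReal.ofReal (∫ y : ℝ, Real.exp (-((1:ℝ)/(n+1) * y ^ 2)) * (CT A y * CT A y)) := by
    intro n
    refine (ofReal_integral_eq_lintegral_ofReal (damped_integrable hA hA (hδpos n)) ?_).symm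
    filter_upwards with y
    exact mul_nonneg (Real.exp_pos _).le (mul_self_nonneg _)
  have hlimint' : Tendsto (fun n : ℕ => ENNReal.ofReal
      (∫ y : ℝ, Real.exp (-((1:ℝ)/(n+1) * y ^ 2)) * (CT A y * CT A y))) atTop
      (𝓝 (∫⁻ y : ℝ, ENNReal.ofReal (CT A y * CT A y) ∂volume)) := by
    refine hlimint.congr fun n => heq n
  have hofJ := ENNReal.tendsto_ofReal hJ
  have key : (∫⁻ y : ℝ, ENNReal.ofReal (CT A y * CT A y) ∂volume)
      = ENNReal.ofReal (2 * π * ∫ ξ : ℝ, A ξ * A ξ) := tendsto_nhds_unique hlimint' hofJ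
  refine ⟨(CT_aesm hA).mul (CT_aesm hA), ?_⟩
  rw [hasFiniteIntegral_iff_norm]
  have : (∫⁻ y : ℝ, ENNReal.ofReal ‖CT A y * CT A y‖ ∂volume)
      = ∫⁻ y : ℝ, ENNReal.ofReal (CT A y * CT A y) ∂volume := by
    apply lintegral_congr
    intro y
    rw [Real.norm_eq_abs, abs_of_nonneg (mul_self_nonneg _)]
  rw [this, key]
  exact ENNReal.ofReal_lt_top

lemma mul_CT_integrable (hAc : Continuous A) (hA : Integrable A) (hA0 : ∀ x, 0 ≤ A x)
    (hA1 : ∀ x, A x ≤ 1) (hAe : ∀ x, A (-x) = A x)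
    (hBc : Continuous B) (hB : Integrable B) (hB0 : ∀ x, 0 ≤ B x) (hB1 : ∀ x, B x ≤ 1)
    (hBe : ∀ x, B (-x) = B x) :
    Integrable (fun y : ℝ => CT A y * CT B y) := by
  have hA2 := CT_sq_integrable hAc hA hA0 hA1 hAe
  have hB2 := CT_sq_integrable hBc hB hB0 hB1 hBe
  refine ((hA2.add hB2).div_const 2).mono ((CT_aesm hA).mul (CT_aesm hB)) ?_
  filter_upwards with y
  simp only [Pi.add_apply]
  rw [Real.norm_eq_abs, Real.norm_eq_abs, abs_mul]
  have h1 : (0:ℝ) ≤ (CT A y * CT A y + CT B y * CT B y) / 2 := by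
    have := mul_self_nonneg (CT A y); have := mul_self_nonneg (CT B y); linarith
  rw [abs_of_nonneg h1]
  nlinarith [sq_nonneg (|CT A y| - |CT B y|), abs_mul_abs_self (CT A y),
    abs_mul_abs_self (CT B y), abs_nonneg (CT A y), abs_nonneg (CT B y)]

theorem CT_parseval (hAc : Continuous A) (hA : Integrable A) (hA0 : ∀ x, 0 ≤ A x)
    (hA1 : ∀ x, A x ≤ 1) (hAe : ∀ x, A (-x) = A x)
    (hBc : Continuous B) (hB : Integrable B) (hB0 : ∀ x, 0 ≤ B x) (hB1 : ∀ x, B x ≤ 1)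
    (hBe : ∀ x, B (-x) = B x) :
    ∫ y : ℝ, CT A y * CT B y = 2 * π * ∫ ξ : ℝ, A ξ * B ξ := by
  have hPQ := mul_CT_integrable hAc hA hA0 hA1 hAe hBc hB hB0 hB1 hBe
  have h1 : Tendsto (fun ε : ℝ => ∫ y : ℝ, Real.exp (-(ε * y ^ 2)) * (CT A y * CT B y))
      (𝓝[>] (0:ℝ)) (𝓝 (∫ y : ℝ, CT A y * CT B y)) := by
    apply tendsto_integral_filter_of_dominated_convergence (fun y : ℝ => |CT A y * CT B y|)
    · filter_upwards with ε
      exact (Real.continuous_exp.comp (by fun_prop)).aestronglyMeasurable.mul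
        ((CT_aesm hA).mul (CT_aesm hB))
    · filter_upwards [self_mem_nhdsWithin] with ε hε
      filter_upwards with y
      rw [Real.norm_eq_abs, abs_mul, Real.abs_exp]
      refine mul_le_of_le_one_left (abs_nonneg _) ?_
      apply Real.exp_le_one_iff.mpr
      have : (0:ℝ) < ε := hε
      nlinarith [sq_nonneg y]
    · exact hPQ.abs
    · filter_upwards with y
      have h1 : Tendsto (fun ε : ℝ => -(ε * y ^ 2)) (𝓝[>] (0:ℝ)) (𝓝 (-(0 * y ^ 2))) :=
        ((tendsto_id.mono_left nhdsWithin_le_nhds).mul_const _).neg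
      have h2 := ((Real.continuous_exp.tendsto _).comp h1).mul_const (CT A y * CT B y)
      simpa using h2
  exact tendsto_nhds_unique h1 (J_tendsto' hAc hA hA0 hA1 hBc hB hB0 hB1 hBe)

section gkFacts

variable {α : ℝ}

lemma gk_cont (hα : 0 < α) (c : ℝ) :
    Continuous fun ξ : ℝ => Real.exp (-(c * |ξ| ^ α) / 2) := by
  apply Real.continuous_exp.comp
  apply Continuous.div_const
  apply Continuous.neg
  exact continuous_const.mul (continuous_abs.rpow_const fun x => Or.inr hα.le)

lemma gk_nonneg (c : ℝ) (ξ : ℝ) : 0 ≤ Real.exp (-(c * |ξ| ^ α) / 2) := (Real.exp_pos _).le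

lemma gk_le_one {c : ℝ} (hc : 0 ≤ c) (ξ : ℝ) : Real.exp (-(c * |ξ| ^ α) / 2) ≤ 1 := by
  apply Real.exp_le_one_iff.mpr
  have h1 : 0 ≤ c * |ξ| ^ α := mul_nonneg hc (Real.rpow_nonneg (abs_nonneg _) _)
  linarith

lemma gk_even (c : ℝ) (ξ : ℝ) :
    Real.exp (-(c * |(-ξ)| ^ α) / 2) = Real.exp (-(c * |ξ| ^ α) / 2) := by rw [abs_neg]

lemma gk_integrable (hα : 1 ≤ α) {c : ℝ} (hc : 0 < c) :
    Integrable fun ξ : ℝ => Real.exp (-(c * |ξ| ^ α) / 2) := by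
  set f : ℝ → ℝ := fun x => Real.exp (-(c/2) * x ^ α) with hf
  have h1 : IntegrableOn f (Set.Ioi (0:ℝ)) := by
    have h := integrableOn_rpow_mul_exp_neg_mul_rpow (s := 0) (p := α) (b := c/2)
      (by norm_num) (by linarith) (half_pos hc)
    refine h.congr_fun ?_ measurableSet_Ioi
    intro x hx
    show x ^ (0:ℝ) * Real.exp (-(c/2) * x ^ α) = f x
    rw [Real.rpow_zero, one_mul]
  have h2 : IntegrableOn (fun x => f |x|) (Set.Ioi (0:ℝ)) := by
    refine h1.congr_fun ?_ measurableSet_Ioi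
    intro x hx
    show f x = f |x|
    rw [abs_of_pos hx]
  have h3 : IntegrableOn (fun x => f |x|) (Set.Iic (0:ℝ)) := by
    rw [← Measure.map_neg_eq_self (volume : Measure ℝ)]
    have m : MeasurableEmbedding fun x : ℝ => -x := (Homeomorph.neg ℝ).measurableEmbedding
    rw [m.integrableOn_map_iff]
    simp_rw [Function.comp_def, abs_neg, Set.neg_preimage, Set.neg_Iic, neg_zero]
    exact Iff.mpr integrableOn_Ici_iff_integrableOn_Ioi h2
  have h4 : Integrable (fun x => f |x|) := by
    have h5 := h3.union h2
    rwa [Set.Iic_union_Ioi, integrableOn_univ] at h5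
  refine h4.congr (Filter.Eventually.of_forall fun x => ?_)
  rw [hf]
  simp only []
  congr 1
  ring

lemma gk_integral (hα : 0 < α) {c : ℝ} (hc : 0 < c) :
    ∫ ξ : ℝ, Real.exp (-(c * |ξ| ^ α) / 2)
      = 2 * ((c/2) ^ (-1/α) * Real.Gamma (1/α + 1)) := by
  have heq : (fun ξ : ℝ => Real.exp (-(c * |ξ| ^ α) / 2))
      = fun ξ : ℝ => (fun x : ℝ => Real.exp (-(c/2) * x ^ α)) |ξ| := by
    funext ξ
    simp only []
    congr 1
    ring
  rw [heq, integral_comp_abs (f := fun x : ℝ => Real.exp (-(c/2) * x ^ α)),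
    integral_exp_neg_mul_rpow hα (half_pos hc)]

lemma stable_inner (hα1 : 1 < α) {a b : ℝ} (ha : 0 < a) (hb : 0 < b) :
    ∫ y : ℝ, stableKernel α a y * stableKernel α b y
      = (2 * π)⁻¹ * (2 * (((a + b)/2) ^ (-1/α) * Real.Gamma (1/α + 1))) := by
  have hα0 : (0:ℝ) < α := lt_trans one_pos hα1
  set A : ℝ → ℝ := fun ξ => Real.exp (-(a * |ξ| ^ α) / 2) with hA
  set B : ℝ → ℝ := fun ξ => Real.exp (-(b * |ξ| ^ α) / 2) with hB
  have hker : ∀ y : ℝ, stableKernel α a y * stableKernel α b y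
      = ((2 * π)⁻¹ * (2 * π)⁻¹) * (CT A y * CT B y) := by
    intro y
    have e1 : stableKernel α a y = (2 * π)⁻¹ * CT A y := rfl
    have e2 : stableKernel α b y = (2 * π)⁻¹ * CT B y := rfl
    rw [e1, e2]; ring
  simp_rw [hker]
  rw [integral_const_mul,
    CT_parseval (gk_cont hα0 a) (gk_integrable hα1.le ha) (gk_nonneg a) (gk_le_one ha.le)
      (gk_even a) (gk_cont hα0 b) (gk_integrable hα1.le hb) (gk_nonneg b) (gk_le_one hb.le)
      (gk_even b)]
  have hAB : ∀ ξ : ℝ, A ξ * B ξ = Real.exp (-((a + b) * |ξ| ^ α) / 2) := by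
    intro ξ
    rw [hA, hB]
    simp only []
    rw [← Real.exp_add]
    congr 1
    ring
  simp only [hA, hB] at hAB
  simp_rw [hAB]
  rw [gk_integral hα0 (by linarith)]
  have hπ : (π:ℝ) ≠ 0 := pi_ne_zero
  field_simp

end gkFacts

end StableAux


/-- With `c_α := (Γ(1/α)/(π(α−1)))^{1/2}`, for all `t, t′ ≥ 0` with `t + t′ > 0`:
`∫₀^{t∧t′} ∫_ℝ p_{t−s}(y) p_{t′−s}(y) dy ds
  = c_α² · 2^{(1−α)/α} · ((t + t′)^{(α−1)/α} − |t − t′|^{(α−1)/α})`.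
This says that, at each fixed spatial point, the solution of the linear stochastic
heat equation driven by space-time white noise has in time the covariance of
`c_α` times a bifractional Brownian motion with parameters `H = 1/2`, `K = (α−1)/α`. -/
theorem stmt_1 (α : ℝ) (hα : α ∈ Set.Ioc (1 : ℝ) 2)
    (t t' : ℝ) (ht : 0 ≤ t) (ht' : 0 ≤ t') (htt' : 0 < t + t') :
    ∫ s in Set.Ioc (0 : ℝ) (min t t'),
        ∫ y : ℝ, stableKernel α (t - s) y * stableKernel α (t' - s) y
      = ((Real.Gamma (1 / α) / (Real.pi * (α - 1))) ^ (1 / 2 : ℝ)) ^ 2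
          * 2 ^ ((1 - α) / α)
          * ((t + t') ^ ((α - 1) / α) - |t - t'| ^ ((α - 1) / α)) := by
  obtain ⟨hα1, hα2⟩ := hα
  have hα0 : (0:ℝ) < α := lt_trans one_pos hα1
  have hαne : α ≠ 0 := hα0.ne'
  set m := min t t' with hmdef
  have hm0 : 0 ≤ m := le_min ht ht'
  have habs : t + t' - 2 * m = |t - t'| := by
    rcases le_total t t' with h | h
    · rw [hmdef, min_eq_left h, abs_of_nonpos (by linarith)]; ring
    · rw [hmdef, min_eq_right h, abs_of_nonneg (by linarith)]; ring
  have hX : (0:ℝ) ≤ Real.Gamma (1/α) / (Real.pi * (α - 1)) :=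
    div_nonneg (Real.Gamma_pos_of_pos (by positivity)).le
      (mul_nonneg Real.pi_pos.le (by linarith))
  have hXsq : ((Real.Gamma (1/α) / (Real.pi * (α - 1))) ^ ((1:ℝ)/2)) ^ 2
      = Real.Gamma (1/α) / (Real.pi * (α - 1)) := by
    rw [← Real.rpow_natCast ((Real.Gamma (1/α) / (Real.pi * (α - 1))) ^ ((1:ℝ)/2)) 2,
      ← Real.rpow_mul hX]
    norm_num
  rcases hm0.eq_or_lt with hm | hm
  · -- m = 0 : both sides vanish
    have h6 : |t - t'| = t + t' := by rw [← habs, ← hm]; ring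
    rw [← hm, Set.Ioc_self, h6, sub_self, mul_zero]
    simp
  · -- 0 < m
    have hmt : m ≤ t := min_le_left _ _
    have hmt' : m ≤ t' := min_le_right _ _
    have h9 : (0:ℝ) ≤ t + t' - 2 * m := habs ▸ abs_nonneg _
    rw [integral_Ioc_eq_integral_Ioo]
    have hcongr : Set.EqOn
        (fun s => ∫ y : ℝ, stableKernel α (t - s) y * stableKernel α (t' - s) y)
        (fun s => (2 * Real.pi)⁻¹ *
          (2 * (((t + t' - 2 * s)/2) ^ (-1/α) * Real.Gamma (1/α + 1)))) (Set.Ioo 0 m) := by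
      intro s hs
      obtain ⟨hs0, hsm⟩ := hs
      have h1 : 0 < t - s := by linarith [lt_of_lt_of_le hsm hmt]
      have h2 : 0 < t' - s := by linarith [lt_of_lt_of_le hsm hmt']
      show (∫ y : ℝ, stableKernel α (t - s) y * stableKernel α (t' - s) y) = _
      rw [StableAux.stable_inner hα1 h1 h2,
        show t - s + (t' - s) = t + t' - 2 * s from by ring]
    rw [setIntegral_congr_fun measurableSet_Ioo hcongr,
      ← integral_Ioc_eq_integral_Ioo, ← intervalIntegral.integral_of_le hm.le]
    have h2inv : ((2:ℝ) ^ (-1/α))⁻¹ = 2 ^ ((1:ℝ)/α) := by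
      rw [← Real.rpow_neg (by norm_num : (0:ℝ) ≤ 2), neg_div, neg_neg]
    have hEq : Set.EqOn
        (fun s => (2 * Real.pi)⁻¹ *
          (2 * (((t + t' - 2 * s)/2) ^ (-1/α) * Real.Gamma (1/α + 1))))
        (fun s => ((2 * Real.pi)⁻¹ * 2 * Real.Gamma (1/α + 1) * 2 ^ ((1:ℝ)/α)) *
          (t + t' - 2 * s) ^ (-1/α)) (Set.uIcc 0 m) := by
      intro s hs
      have hs' : s ∈ Set.Icc 0 m := by rwa [Set.uIcc_of_le hm.le] at hs
      have hx : 0 ≤ t + t' - 2 * s := by linarith [hs'.2, h9]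
      show (2 * Real.pi)⁻¹ * (2 * (((t + t' - 2 * s)/2) ^ (-1/α) * Real.Gamma (1/α + 1))) = _
      rw [Real.div_rpow hx (by norm_num : (0:ℝ) ≤ 2), div_eq_mul_inv, h2inv]
      ring
    rw [intervalIntegral.integral_congr hEq, intervalIntegral.integral_const_mul,
      intervalIntegral.integral_comp_sub_mul (fun u : ℝ => u ^ (-1/α)) two_ne_zero (t + t')]
    have hexp : (-1:ℝ) < -1/α := by
      have h10 : 1/α < 1 := by rw [div_lt_one hα0]; linarith
      rw [neg_div]
      linarith
    rw [integral_rpow (Or.inl hexp)]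
    rw [show t + t' - 2 * 0 = t + t' from by ring, habs]
    have hK : -1/α + 1 = (α - 1)/α := by field_simp; ring
    rw [hK, hXsq, smul_eq_mul]
    have h2K : (2:ℝ) ^ ((1 - α)/α) = 2 ^ ((1:ℝ)/α) / 2 := by
      rw [show (1 - α)/α = 1/α - 1 from by field_simp,
        Real.rpow_sub (by norm_num : (0:ℝ) < 2), Real.rpow_one]
    rw [h2K, Real.Gamma_add_one (by positivity : (1:ℝ)/α ≠ 0)]
    have hKne : (α - 1)/α ≠ 0 := (div_pos (by linarith) hα0).ne'
    have hαm1 : α - 1 ≠ 0 := (by linarith : (0:ℝ) < α - 1).ne'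
    have hS : (2 * Real.pi)⁻¹ * 2 * (1/α * Real.Gamma (1/α)) * 2 ^ ((1:ℝ)/α) * 2⁻¹ * ((α - 1)/α)⁻¹
        = Real.Gamma (1/α) / (Real.pi * (α - 1)) * (2 ^ ((1:ℝ)/α) / 2) := by
      field_simp
    linear_combination ((t + t') ^ ((α - 1)/α) - |t - t'| ^ ((α - 1)/α)) * hS
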